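/- Let G be a simple graph such that there exists a set F of at most k edges with G − F a starforest, and suppose G has no connected component with 1 or 2 vertices. Let C be the set of vertices of G adjacent to at least one vertex of degree 1 in G. Then there exists a set F' of at most k edges of G such that G − F' is a starforest admitting a center set C* with C ⊆ C*. -/

import Mathlib

open SimpleGraph

/-- A starforest is an acyclic graph in which every connected component has at most one
vertex of degree greater than 1 (i.e. every component is a star). -/
def SimpleGraph.IsStarforest {V : Type*} (H : SimpleGraph V) : Prop :=
  H.IsAcyclic ∧ ∀ c : H.ConnectedComponent,
    {v : V | H.connectedComponentMk v = c ∧ 1 < (H.neighborSet v).ncard}.Subsingleton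

/-- A center set of a starforest: a dominating set containing exactly one vertex of each
connected component. -/
def IsCenterSet {V : Type*} (S : SimpleGraph V) (C : Set V) : Prop :=
  (∀ v : V, v ∉ C → ∃ u ∈ C, S.Adj u v) ∧
  ∀ c : S.ConnectedComponent, ∃! u : V, u ∈ C ∧ u ∈ c.supp


section Aux

variable {V : Type*}

lemma mem_eq_of_ncard_le_one {s : Set V} (hs : s.Finite) (h : s.ncard ≤ 1) {a b : V}
    (ha : a ∈ s) (hb : b ∈ s) : a = b := by
  by_contra hne
  have := (Set.one_lt_ncard_iff hs).mpr ⟨a, b, ha, hb, hne⟩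
  omega

lemma eq_singleton_of_ncard_le_one {s : Set V} (hs : s.Finite) {a : V} (ha : a ∈ s)
    (h : s.ncard ≤ 1) : s = {a} :=
  Set.eq_singleton_iff_unique_mem.mpr ⟨ha, fun _ hb => mem_eq_of_ncard_le_one hs h hb ha⟩

lemma one_lt_ncard_of_two_mem {s : Set V} (hs : s.Finite) {a b : V} (ha : a ∈ s) (hb : b ∈ s)
    (hne : a ≠ b) : 1 < s.ncard :=
  (Set.one_lt_ncard_iff hs).mpr ⟨a, b, ha, hb, hne⟩

lemma walk_closed {X : SimpleGraph V} {T : Set V}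
    (hT : ∀ a ∈ T, ∀ b, X.Adj a b → b ∈ T) :
    ∀ {a b : V}, X.Walk a b → a ∈ T → b ∈ T := by
  intro a b p
  induction p with
  | nil => exact id
  | cons h q ih => exact fun ha => ih (hT _ ha _ h)

lemma reach_transfer {X Y : SimpleGraph V} {T : Set V}
    (h : ∀ a ∉ T, ∀ b, X.Adj a b → Y.Adj a b ∧ b ∉ T) :
    ∀ {a b : V}, X.Walk a b → a ∉ T → Y.Reachable a b ∧ b ∉ T := by
  intro a b p
  induction p with
  | nil => exact fun ha => ⟨Reachable.refl _, ha⟩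
  | cons hadj q ih =>
    intro ha
    obtain ⟨hY, hb⟩ := h _ ha _ hadj
    obtain ⟨hr, hend⟩ := ih hb
    exact ⟨hY.reachable.trans hr, hend⟩

lemma star_structure [Fintype V] (X : SimpleGraph V) (x : V)
    (hsub : ∀ y₁ y₂, X.Reachable x y₁ → X.Reachable x y₂ →
      1 < (X.neighborSet y₁).ncard → 1 < (X.neighborSet y₂).ncard → y₁ = y₂) :
    ∃ z, X.Reachable x z ∧ ∀ y, X.Reachable x y → y ≠ z → X.neighborSet y = {z} := by
  classical
  by_cases hbig : ∃ z, X.Reachable x z ∧ 1 < (X.neighborSet z).ncard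
  · obtain ⟨z, hxz, hz⟩ := hbig
    refine ⟨z, hxz, fun y hxy hne => ?_⟩
    have hy : (X.neighborSet y).ncard ≤ 1 := by
      by_contra hy
      exact hne (hsub y z hxy hxz (by omega) hz)
    have hyz : X.Reachable y z := hxy.symm.trans hxz
    obtain ⟨p0⟩ := hyz
    obtain ⟨p, hp⟩ := p0.toPath
    cases p with
    | nil => exact absurd rfl hne
    | @cons _ b _ hadj q =>
      have hb : b ∈ X.neighborSet y := hadj
      have hNy : X.neighborSet y = {b} := eq_singleton_of_ncard_le_one (Set.toFinite _) hb hy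
      suffices hbz : b = z by rw [hbz] at hNy; exact hNy
      cases q with
      | nil => rfl
      | @cons _ c _ hadj2 r =>
        exfalso
        have hnodup := hp.support_nodup
        rw [SimpleGraph.Walk.support_cons, SimpleGraph.Walk.support_cons] at hnodup
        have hyc : y ≠ c := by
          intro h
          exact (List.nodup_cons.mp hnodup).1 (by
            rw [h]
            exact List.mem_cons_of_mem _ r.start_mem_support)
        have hbB : 1 < (X.neighborSet b).ncard :=
          one_lt_ncard_of_two_mem (Set.toFinite _) hadj.symm hadj2 hyc
        have hxb : X.Reachable x b := hxy.trans hadj.reachable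
        have hbz : b = z := hsub b z hxb hxz hbB hz
        exact (List.nodup_cons.mp (List.nodup_cons.mp hnodup).2).1 (hbz ▸ r.end_mem_support)
  · push_neg at hbig
    by_cases hNx : X.neighborSet x = ∅
    · refine ⟨x, Reachable.refl _, fun y hxy hne => ?_⟩
      exfalso
      obtain ⟨p⟩ := hxy
      cases p with
      | nil => exact hne rfl
      | @cons _ b _ hadj q =>
        have hmem : b ∈ X.neighborSet x := hadj
        rw [hNx] at hmem; exact hmem
    · obtain ⟨a, ha⟩ := Set.nonempty_iff_ne_empty.mpr hNx
      have hxle : (X.neighborSet x).ncard ≤ 1 := by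
        have := hbig x (Reachable.refl _); omega
      have hNxa : X.neighborSet x = {a} := eq_singleton_of_ncard_le_one (Set.toFinite _) ha hxle
      refine ⟨a, (Adj.reachable ha).symm.symm, fun y hxy hne => ?_⟩
      by_cases hyx : y = x
      · rw [hyx]; exact hNxa
      · exfalso
        obtain ⟨p0⟩ := hxy
        obtain ⟨p, hp⟩ := p0.toPath
        cases p with
        | nil => exact hyx rfl
        | @cons _ b _ hadj q =>
          have hba : b = a := by
            have : b ∈ X.neighborSet x := hadj
            rw [hNxa] at this; exact this
          subst hba
          cases q with
          | nil => exact hne rfl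
          | @cons _ c _ hadj2 r =>
            have hnodup := hp.support_nodup
            rw [SimpleGraph.Walk.support_cons, SimpleGraph.Walk.support_cons] at hnodup
            have hxc : x ≠ c := by
              intro h
              exact (List.nodup_cons.mp hnodup).1 (by
                rw [h]
                exact List.mem_cons_of_mem _ r.start_mem_support)
            have : 1 < (X.neighborSet b).ncard :=
              one_lt_ncard_of_two_mem (Set.toFinite _) hadj.symm hadj2 hxc
            have := hbig b hadj.reachable
            omega

end Aux


section Defs
variable {V : Type*}

def Cset (G : SimpleGraph V) : Set V := {v | ∃ w, (G.neighborSet w).ncard = 1 ∧ G.Adj v w}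

open Classical in
noncomputable def leafOf (G : SimpleGraph V) (v : V) : V :=
  if h : v ∈ Cset G then h.choose else v

lemma leafOf_spec {G : SimpleGraph V} {v : V} (h : v ∈ Cset G) :
    (G.neighborSet (leafOf G v)).ncard = 1 ∧ G.Adj v (leafOf G v) := by
  rw [leafOf, dif_pos h]; exact h.choose_spec

def Pset (G : SimpleGraph V) (F : Set (Sym2 V)) : Set V :=
  {v | v ∈ Cset G ∧ ((G.deleteEdges F).neighborSet v).ncard ≤ 1}

def Dset (G : SimpleGraph V) (F : Set (Sym2 V)) : Set (Sym2 V) :=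
  {e | ∃ v ∈ Pset G F, ∃ u, (G.deleteEdges F).Adj v u ∧ e = s(v, u)}

noncomputable def Aset (G : SimpleGraph V) (F : Set (Sym2 V)) : Set (Sym2 V) :=
  {e | ∃ v ∈ Pset G F, e = s(v, leafOf G v)}

lemma leafOf_nbr {G : SimpleGraph V} [Fintype V] {v : V} (h : v ∈ Cset G) :
    G.neighborSet (leafOf G v) = {v} := by
  obtain ⟨h1, h2⟩ := leafOf_spec h
  exact eq_singleton_of_ncard_le_one (Set.toFinite _) h2.symm (le_of_eq h1)

end Defs

/-- If `G` has no component on 1 or 2 vertices and some set `F` of at most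
`k` edges makes `G - F` a starforest, then there is a set `F'` of at most `k` edges such
that `G - F'` is a starforest with a center set containing every vertex of `G` adjacent to
a degree-1 vertex of `G`. -/
theorem centers_can_be_labeled {V : Type*} [Fintype V] (G : SimpleGraph V) (k : ℕ)
    (hcomp : ∀ c : G.ConnectedComponent, 3 ≤ c.supp.ncard)
    (F : Set (Sym2 V)) (hF : F ⊆ G.edgeSet) (hk : F.ncard ≤ k)
    (hsf : (G.deleteEdges F).IsStarforest) :
    ∃ F' : Set (Sym2 V), F' ⊆ G.edgeSet ∧ F'.ncard ≤ k ∧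
      (G.deleteEdges F').IsStarforest ∧
      ∃ C' : Set V, IsCenterSet (G.deleteEdges F') C' ∧
        {v : V | ∃ w, (G.neighborSet w).ncard = 1 ∧ G.Adj v w} ⊆ C' := by
  classical
  set S := G.deleteEdges F with hSdef
  set C := Cset G with hCdef
  set P := Pset G F with hPdef
  set D := Dset G F with hDdef
  set A := Aset G F with hAdef
  set F' := (F ∪ D) \ A with hF'def
  set H := G.deleteEdges F' with hHdef
  set lf := leafOf G with hlfdef
  -- basic facts
  have hCL : ∀ v ∈ C, (G.neighborSet v).ncard ≠ 1 := by
    rintro v ⟨w, hw1, hw2⟩ hv1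
    have hwv : w ∈ G.neighborSet v := hw2
    have hvw : v ∈ G.neighborSet w := hw2.symm
    have hNv : G.neighborSet v = {w} :=
      eq_singleton_of_ncard_le_one (Set.toFinite _) hwv (le_of_eq hv1)
    have hNw : G.neighborSet w = {v} :=
      eq_singleton_of_ncard_le_one (Set.toFinite _) hvw (le_of_eq hw1)
    have hclosed : ∀ a ∈ ({v, w} : Set V), ∀ b, G.Adj a b → b ∈ ({v, w} : Set V) := by
      rintro a (rfl | rfl) b hab
      · have : b ∈ G.neighborSet a := hab
        rw [hNv] at this
        exact Or.inr this
      · have : b ∈ G.neighborSet a := hab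
        rw [hNw] at this
        exact Or.inl this
    have hsupp : (G.connectedComponentMk v).supp ⊆ ({v, w} : Set V) := by
      intro u hu
      have hr : G.Reachable v u := (ConnectedComponent.exact hu).symm
      obtain ⟨p⟩ := hr
      exact walk_closed hclosed p (Or.inl rfl)
    have h2 : (G.connectedComponentMk v).supp.ncard ≤ 2 := by
      have hle := Set.ncard_le_ncard hsupp (Set.toFinite _)
      have : ({v, w} : Set V).ncard ≤ 2 := by
        have := Set.ncard_insert_le v ({w} : Set V)
        simpa [Set.ncard_singleton] using this
      omega
    have := hcomp (G.connectedComponentMk v)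
    omega
  have hlf1 : ∀ v ∈ C, (G.neighborSet (lf v)).ncard = 1 := fun v hv => (leafOf_spec hv).1
  have hlf2 : ∀ v ∈ C, G.Adj v (lf v) := fun v hv => (leafOf_spec hv).2
  have hlfn : ∀ v ∈ C, G.neighborSet (lf v) = {v} := fun v hv => leafOf_nbr hv
  have hPC : P ⊆ C := fun v hv => hv.1
  have hlf_notC : ∀ v ∈ C, lf v ∉ C := fun v hv h => hCL _ h (hlf1 v hv)
  have hSadj : ∀ x y : V, S.Adj x y ↔ G.Adj x y ∧ s(x, y) ∉ F := fun x y => deleteEdges_adj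
  have hHadj : ∀ x y : V, H.Adj x y ↔ G.Adj x y ∧ (s(x, y) ∈ A ∨ (s(x, y) ∉ F ∧ s(x, y) ∉ D)) := by
    intro x y
    rw [hHdef, deleteEdges_adj, hF'def]
    constructor
    · rintro ⟨hg, hn⟩
      refine ⟨hg, ?_⟩
      by_cases hA : s(x, y) ∈ A
      · exact Or.inl hA
      · refine Or.inr ⟨fun hFm => hn ⟨Or.inl hFm, hA⟩, fun hDm => hn ⟨Or.inr hDm, hA⟩⟩
    · rintro ⟨hg, hA | ⟨h1, h2⟩⟩
      · exact ⟨hg, fun hmem => hmem.2 hA⟩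
      · exact ⟨hg, fun hmem => hmem.1.elim h1 h2⟩
  have N1 : ∀ v ∈ P, H.neighborSet v = {lf v} := by
    intro v hv
    ext x
    simp only [mem_neighborSet, Set.mem_singleton_iff]
    constructor
    · intro hadj
      rcases (hHadj v x).mp hadj with ⟨hg, hA | ⟨h1, h2⟩⟩
      · obtain ⟨v2, hv2, heq⟩ := hA
        rcases Sym2.eq_iff.mp heq with ⟨rfl, rfl⟩ | ⟨h3, h4⟩
        · rfl
        · refine absurd ?_ (hlf_notC v2 (hPC hv2))
          rw [hlfdef]
          exact h3 ▸ hPC hv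
      · exfalso
        exact h2 ⟨v, hv, x, (hSadj v x).mpr ⟨hg, h1⟩, rfl⟩
    · rintro rfl
      exact (hHadj v (lf v)).mpr ⟨hlf2 v (hPC hv), Or.inl ⟨v, hv, rfl⟩⟩
  have N2 : ∀ v ∈ P, H.neighborSet (lf v) = {v} := by
    intro v hv
    apply Set.Subset.antisymm
    · intro x hx
      have hg : G.Adj (lf v) x := ((hHadj (lf v) x).mp hx).1
      have : x ∈ G.neighborSet (lf v) := hg
      rw [hlfn v (hPC hv)] at this
      exact this
    · intro x hx
      rcases hx with rfl
      have : lf x ∈ H.neighborSet x := by rw [N1 x hv]; rfl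
      exact (Adj.symm this : H.Adj (lf x) x)
  have NH3 : ∀ x, x ∉ P → (∀ v ∈ P, x ≠ lf v) → H.neighborSet x = S.neighborSet x \ P := by
    intro x hxP hxW
    ext y
    simp only [mem_neighborSet, Set.mem_diff]
    constructor
    · intro hadj
      rcases (hHadj x y).mp hadj with ⟨hg, hA | ⟨h1, h2⟩⟩
      · exfalso
        obtain ⟨v2, hv2, heq⟩ := hA
        rcases Sym2.eq_iff.mp heq with ⟨rfl, rfl⟩ | ⟨h3, h4⟩
        · exact hxP hv2
        · exact hxW v2 hv2 h3
      · have hS : S.Adj x y := (hSadj x y).mpr ⟨hg, h1⟩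
        refine ⟨hS, fun hyP => h2 ⟨y, hyP, x, hS.symm, Sym2.eq_swap⟩⟩
    · rintro ⟨hS, hyP⟩
      obtain ⟨hg, h1⟩ := (hSadj x y).mp hS
      refine (hHadj x y).mpr ⟨hg, Or.inr ⟨h1, ?_⟩⟩
      rintro ⟨v2, hv2, u, hu, heq⟩
      rcases Sym2.eq_iff.mp heq with ⟨rfl, rfl⟩ | ⟨rfl, rfl⟩
      · exact hxP hv2
      · exact hyP hv2
  have two : ∀ v ∈ P, ∀ y, H.Reachable v y → y = v ∨ y = lf v := by
    intro v hv y hr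
    have hclosed : ∀ a ∈ ({v, lf v} : Set V), ∀ b, H.Adj a b → b ∈ ({v, lf v} : Set V) := by
      rintro a (rfl | rfl) b hab
      · have : b ∈ H.neighborSet a := hab
        rw [N1 a hv] at this
        exact Or.inr this
      · have : b ∈ H.neighborSet (lf v) := hab
        rw [N2 v hv] at this
        exact Or.inl this
    obtain ⟨p⟩ := hr
    exact walk_closed hclosed p (Or.inl rfl)
  have transfer : ∀ x, x ∉ P → (∀ v ∈ P, x ≠ lf v) → ∀ y, H.Reachable x y →
      S.Reachable x y ∧ y ∉ P ∧ ∀ v ∈ P, y ≠ lf v := by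
    intro x hxP hxW y hr
    have hstep : ∀ a ∉ (P ∪ {x | ∃ v ∈ P, x = lf v}), ∀ b, H.Adj a b →
        S.Adj a b ∧ b ∉ (P ∪ {x | ∃ v ∈ P, x = lf v}) := by
      intro a ha b hab
      have haP : a ∉ P := fun h => ha (Or.inl h)
      have haW : ∀ v ∈ P, a ≠ lf v := fun v hv h => ha (Or.inr ⟨v, hv, h⟩)
      have hmem : b ∈ H.neighborSet a := hab
      rw [NH3 a haP haW] at hmem
      refine ⟨hmem.1, ?_⟩
      rintro (hbP | ⟨v2, hv2, rfl⟩)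
      · exact hmem.2 hbP
      · have : a ∈ H.neighborSet (lf v2) := hab.symm
        rw [N2 v2 hv2] at this
        exact haP (this ▸ hv2)
    obtain ⟨p⟩ := hr
    obtain ⟨hrS, hend⟩ := reach_transfer hstep p (by
      rintro (h | ⟨v2, hv2, h⟩)
      · exact hxP h
      · exact hxW v2 hv2 h)
    exact ⟨hrS, fun h => hend (Or.inl h), fun v hv h => hend (Or.inr ⟨v, hv, h⟩)⟩
  have starS : ∀ x : V, ∃ z, S.Reachable x z ∧
      ∀ y, S.Reachable x y → y ≠ z → S.neighborSet y = {z} := by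
    intro x
    apply star_structure
    intro y₁ y₂ h1 h2 hb1 hb2
    exact hsf.2 (S.connectedComponentMk x)
      ⟨ConnectedComponent.sound h1.symm, hb1⟩ ⟨ConnectedComponent.sound h2.symm, hb2⟩
  have main : ∀ x : V, ∃ z : V, H.Reachable x z ∧
      (∀ y, H.Reachable x y → y ≠ z → H.neighborSet y = {z}) ∧
      (∀ v ∈ C, H.Reachable x v → v = z) := by
    intro x
    by_cases hxP : x ∈ P
    · refine ⟨x, Reachable.refl _, ?_, ?_⟩
      · intro y hy hne
        rcases two x hxP y hy with h | h
        · exact absurd h hne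
        · rw [h]; exact N2 x hxP
      · intro v hv hr
        rcases two x hxP v hr with h | h
        · exact h
        · exfalso
          rw [hlfdef] at h
          have hm := hv
          rw [h] at hm
          exact hlf_notC x (hPC hxP) hm
    · by_cases hxW : ∃ v ∈ P, x = lf v
      · obtain ⟨v, hv, rfl⟩ := hxW
        have hadj : H.Adj (lf v) v := by
          have : v ∈ H.neighborSet (lf v) := by rw [N2 v hv]; rfl
          exact this
        refine ⟨v, hadj.reachable, ?_, ?_⟩
        · intro y hy hne
          have hr : H.Reachable v y := hadj.symm.reachable.trans hy
          rcases two v hv y hr with h | h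
          · exact absurd h hne
          · rw [h]; exact N2 v hv
        · intro v2 hv2 hr
          have hr2 : H.Reachable v v2 := hadj.symm.reachable.trans hr
          rcases two v hv v2 hr2 with h | h
          · exact h
          · exfalso
            rw [hlfdef] at h
            have hm := hv2
            rw [h] at hm
            exact hlf_notC v (hPC hv) hm
      · push_neg at hxW
        obtain ⟨zS, hzS1, hzS2⟩ := starS x
        have htr : ∀ y, H.Reachable x y → S.Reachable x y ∧ y ∉ P ∧ ∀ v ∈ P, y ≠ lf v :=
          transfer x hxP hxW
        have hCbig : ∀ v ∈ C, H.Reachable x v → v = zS := by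
          intro v hv hr
          obtain ⟨hrS, hvP, _⟩ := htr v hr
          have hdeg : 1 < (S.neighborSet v).ncard := by
            by_contra h
            refine hvP ⟨hv, ?_⟩
            rw [← hSdef]
            omega
          by_contra hne
          have := hzS2 v hrS hne
          rw [this] at hdeg
          simp at hdeg
        by_cases hxz : x = zS
        · subst hxz
          refine ⟨x, Reachable.refl _, ?_, hCbig⟩
          intro y hy hne
          obtain ⟨hrS, hyP, hyW⟩ := htr y hy
          have hNS : S.neighborSet y = {x} := hzS2 y hrS hne
          rw [NH3 y hyP hyW, hNS]
          ext u
          simp only [Set.mem_diff, Set.mem_singleton_iff]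
          exact ⟨fun h => h.1, fun h => ⟨h, fun hu => hxP (h ▸ hu)⟩⟩
        · have hNSx : S.neighborSet x = {zS} := hzS2 x (Reachable.refl _) hxz
          have hNHx : H.neighborSet x = {zS} \ P := by rw [NH3 x hxP hxW, hNSx]
          by_cases hzP : zS ∈ P
          · have hiso : H.neighborSet x = ∅ := by
              rw [hNHx]
              ext u
              simp only [Set.mem_diff, Set.mem_singleton_iff, Set.mem_empty_iff_false,
                iff_false, not_and, not_not]
              rintro rfl
              exact hzP
            have honly : ∀ y, H.Reachable x y → y = x := by
              intro y hy
              have hclosed : ∀ a ∈ ({x} : Set V), ∀ b, H.Adj a b → b ∈ ({x} : Set V) := by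
                rintro a rfl b hab
                exfalso
                have : b ∈ H.neighborSet a := hab
                rw [hiso] at this
                exact this
              obtain ⟨p⟩ := hy
              exact walk_closed hclosed p rfl
            refine ⟨x, Reachable.refl _, ?_, ?_⟩
            · intro y hy hne
              exact absurd (honly y hy) hne
            · intro v hv hr
              have hvx := honly v hr
              subst hvx
              rfl
          · have hadj : H.Adj x zS := by
              have : zS ∈ H.neighborSet x := by
                rw [hNHx]
                exact ⟨rfl, hzP⟩
              exact this
            refine ⟨zS, hadj.reachable, ?_, hCbig⟩
            intro y hy hne
            obtain ⟨hrS, hyP, hyW⟩ := htr y hy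
            have hNS : S.neighborSet y = {zS} := hzS2 y hrS hne
            rw [NH3 y hyP hyW, hNS]
            ext u
            simp only [Set.mem_diff, Set.mem_singleton_iff]
            exact ⟨fun h => h.1, fun h => ⟨h, fun hu => hzP (h ▸ hu)⟩⟩
  -- the center function
  have hmk : ∀ c : H.ConnectedComponent, H.connectedComponentMk (Quot.out c) = c :=
    fun c => Quot.out_eq c
  set ctr : H.ConnectedComponent → V := fun c => (main (Quot.out c)).choose with hctrdef
  have hctr : ∀ c : H.ConnectedComponent, H.Reachable (Quot.out c) (ctr c) ∧
      (∀ y, H.Reachable (Quot.out c) y → y ≠ ctr c → H.neighborSet y = {ctr c}) ∧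
      (∀ v ∈ C, H.Reachable (Quot.out c) v → v = ctr c) :=
    fun c => (main (Quot.out c)).choose_spec
  set C' : Set V := {x | x = ctr (H.connectedComponentMk x)} with hC'def
  have hreach_out : ∀ x : V, H.Reachable (Quot.out (H.connectedComponentMk x)) x := by
    intro x
    exact ConnectedComponent.exact (hmk _)
  have hctr_mk : ∀ c, H.connectedComponentMk (ctr c) = c := by
    intro c
    have h := ConnectedComponent.sound (hctr c).1
    rw [← h]
    exact hmk c
  have hctrC' : ∀ c, ctr c ∈ C' := by
    intro c
    show ctr c = ctr (H.connectedComponentMk (ctr c))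
    rw [hctr_mk c]
  have hCsub : C ⊆ C' := by
    intro v hv
    show v = ctr (H.connectedComponentMk v)
    exact (hctr _).2.2 v hv (hreach_out v)
  refine ⟨F', ?_, ?_, ⟨?_, ?_⟩, C', ⟨?_, ?_⟩, hCsub⟩
  · -- F' ⊆ G.edgeSet
    rintro e ⟨he, -⟩
    rcases he with he | he
    · exact hF he
    · obtain ⟨v, hv, u, hu, rfl⟩ := he
      rw [mem_edgeSet]
      exact ((hSadj v u).mp hu).1
  · -- cardinality
    have hDex : ∀ e, e ∈ D → ∃ v, v ∈ P ∧ ∃ u, S.Adj v u ∧ e = s(v, u) := fun e he => he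
    set φ : Sym2 V → Sym2 V := fun e =>
      if h : e ∈ D then s((hDex e h).choose, lf ((hDex e h).choose)) else e with hphi
    have hsub1 : F' \ F ⊆ D \ A := by
      rintro e ⟨he1, he2⟩
      exact ⟨he1.1.resolve_left he2, he1.2⟩
    have hφspec : ∀ e, (he : e ∈ D \ A) →
        φ e = s((hDex e he.1).choose, lf ((hDex e he.1).choose)) :=
      fun e he => dif_pos he.1
    have hφF : ∀ e, (he : e ∈ D \ A) → φ e ∈ F ∧ φ e ∈ A := by
      intro e he
      obtain ⟨hv, u, hu, heq⟩ := (hDex e he.1).choose_spec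
      set v := (hDex e he.1).choose
      have hnotS : ¬ S.Adj v (lf v) := by
        intro hS
        have hule : (S.neighborSet v).ncard ≤ 1 := hv.2
        have : u = lf v := mem_eq_of_ncard_le_one (Set.toFinite _) hule hu hS
        exact he.2 ⟨v, hv, by rw [heq, this]⟩
      constructor
      · rw [hφspec e he]
        by_contra hnF
        exact hnotS ((hSadj v (lf v)).mpr ⟨hlf2 v (hPC hv), hnF⟩)
      · rw [hφspec e he]
        exact ⟨v, hv, rfl⟩
    have hmaps : ∀ e ∈ F' \ F, φ e ∈ F \ F' := by
      intro e he
      obtain ⟨h1, h2⟩ := hφF e (hsub1 he)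
      exact ⟨h1, fun hmem => hmem.2 h2⟩
    have hinj : Set.InjOn φ (F' \ F) := by
      intro e1 he1 e2 he2 heq
      have hd1 := hsub1 he1
      have hd2 := hsub1 he2
      rw [hφspec e1 hd1, hφspec e2 hd2] at heq
      obtain ⟨hv1, u1, hu1, hq1⟩ := (hDex e1 hd1.1).choose_spec
      obtain ⟨hv2, u2, hu2, hq2⟩ := (hDex e2 hd2.1).choose_spec
      have hveq : (hDex e1 hd1.1).choose = (hDex e2 hd2.1).choose := by
        rcases Sym2.eq_iff.mp heq with ⟨h, -⟩ | ⟨h, -⟩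
        · exact h
        · exfalso
          have hm := hPC hv1
          rw [h] at hm
          exact hlf_notC _ (hPC hv2) hm
      have hule : (S.neighborSet (hDex e2 hd2.1).choose).ncard ≤ 1 := hv2.2
      rw [hveq] at hu1
      have huu : u1 = u2 := mem_eq_of_ncard_le_one (Set.toFinite _) hule hu1 hu2
      rw [hq1, hq2, hveq, huu]
    have c1 : (F' \ F).ncard ≤ (F \ F').ncard :=
      Set.ncard_le_ncard_of_injOn φ hmaps hinj (Set.toFinite _)
    have e1 := Set.ncard_inter_add_ncard_diff_eq_ncard F' F (Set.toFinite _)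
    have e2 := Set.ncard_inter_add_ncard_diff_eq_ncard F F' (Set.toFinite _)
    have e3 : F' ∩ F = F ∩ F' := Set.inter_comm _ _
    rw [e3] at e1
    omega
  · -- acyclic
    intro a p hp
    obtain ⟨z, hz1, hz2, hz3⟩ := main a
    have h3 := hp.three_le_length
    cases p with
    | nil => simp at h3
    | @cons _ b _ hab q =>
      cases q with
      | nil => simp [SimpleGraph.Walk.length_cons] at h3
      | @cons _ d _ hbd r =>
        cases r with
        | nil => simp [SimpleGraph.Walk.length_cons] at h3
        | @cons _ e _ hde r2 =>
          have hnd := hp.support_nodup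
          rw [SimpleGraph.Walk.support_cons, List.tail_cons,
            SimpleGraph.Walk.support_cons, SimpleGraph.Walk.support_cons] at hnd
          have hbnd := (List.nodup_cons.mp hnd).1
          have hnd2 := (List.nodup_cons.mp hnd).2
          have hdnr := (List.nodup_cons.mp hnd2).1
          have haR : a ∈ r2.support := r2.end_mem_support
          have hda : d ≠ a := fun h => hdnr (h ▸ haR)
          have hdb : d ≠ b := fun h => hbnd (by rw [h]; exact List.mem_cons_self)
          have heb : e ≠ b := fun h =>
            hbnd (by rw [← h]; exact List.mem_cons_of_mem _ r2.start_mem_support)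
          have hbz : b = z := by
            by_contra hne
            have hN := hz2 b hab.reachable hne
            have hamem : a ∈ H.neighborSet b := hab.symm
            have hdmem : d ∈ H.neighborSet b := hbd
            rw [hN] at hamem hdmem
            exact hda (hdmem.trans hamem.symm)
          have hdz : d ≠ z := fun h => hdb (h.trans hbz.symm)
          have hN := hz2 d (hab.reachable.trans hbd.reachable) hdz
          have hbmem : b ∈ H.neighborSet d := hbd.symm
          have hemem : e ∈ H.neighborSet d := hde
          rw [hN] at hbmem hemem
          exact heb (hemem.trans hbmem.symm)
  · -- star components
    intro c y₁ hy₁ y₂ hy₂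
    obtain ⟨hm1, hd1⟩ := hy₁
    obtain ⟨hm2, hd2⟩ := hy₂
    have h1 : y₁ = ctr c := by
      by_contra hne
      have hr : H.Reachable (Quot.out c) y₁ := by
        rw [← hm1]; exact hreach_out y₁
      have := (hctr c).2.1 y₁ hr hne
      rw [this] at hd1
      simp [Set.ncard_singleton] at hd1
    have h2 : y₂ = ctr c := by
      by_contra hne
      have hr : H.Reachable (Quot.out c) y₂ := by
        rw [← hm2]; exact hreach_out y₂
      have := (hctr c).2.1 y₂ hr hne
      rw [this] at hd2
      simp [Set.ncard_singleton] at hd2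
    rw [h1, h2]
  · -- dominating
    intro v hv
    refine ⟨ctr (H.connectedComponentMk v), hctrC' _, ?_⟩
    have hne : v ≠ ctr (H.connectedComponentMk v) := fun h => hv h
    have := (hctr (H.connectedComponentMk v)).2.1 v (hreach_out v) hne
    have hmem : ctr (H.connectedComponentMk v) ∈ H.neighborSet v := by rw [this]; rfl
    exact hmem.symm
  · -- exactly one center per component
    intro c
    refine ⟨ctr c, ⟨hctrC' c, ?_⟩, ?_⟩
    · exact hctr_mk c
    · rintro u ⟨hu1, hu2⟩
      have : H.connectedComponentMk u = c := hu2
      rw [hC'def] at hu1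
      simpa [this] using hu1
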